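/- Let p > 3 be a prime. For the one-parameter family y² = x³ + t x² + t², the first-moment sum satisfies ∑_{t mod p} a_t(p) = −p, where a_t(p) := −∑_{x mod p} χ(x³ + t x² + t²). -/

import Mathlib

open Finset

section Aux

variable {p : ℕ} [Fact p.Prime]

private lemma aux_char_ne_two (hp : 3 < p) : ringChar (ZMod p) ≠ 2 := by
  rw [ZMod.ringChar_zmod_n]; omega

private lemma aux_two_ne_zero (hp : 3 < p) : (2 : ZMod p) ≠ 0 := by
  intro h
  have : (p : ℕ) ∣ 2 := by
    have := (ZMod.natCast_eq_zero_iff 2 p).mp (by exact_mod_cast h)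
    exact this
  have := Nat.le_of_dvd (by norm_num) this
  omega

private lemma aux_four_ne_zero (hp : 3 < p) : (4 : ZMod p) ≠ 0 := by
  intro h
  have : (p : ℕ) ∣ 4 := by
    have := (ZMod.natCast_eq_zero_iff 4 p).mp (by exact_mod_cast h)
    exact this
  have h2 : p ∣ 2 := (Fact.out : p.Prime).dvd_of_dvd_pow (n := 2) (by norm_num [this, pow_two])
  have := Nat.le_of_dvd (by norm_num) h2
  omega

private lemma aux_shift_sum (hp : 3 < p) (a : ZMod p) :
    ∑ v : ZMod p, quadraticChar (ZMod p) (v + a) = 0 := by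
  exact (Fintype.sum_equiv (Equiv.addRight a) (fun v => quadraticChar (ZMod p) (v + a))
    (fun w => quadraticChar (ZMod p) w) (fun v => rfl)).trans
    (quadraticChar_sum_zero (aux_char_ne_two hp))

private lemma aux_J (hp : 3 < p) {a : ZMod p} (ha : a ≠ 0) :
    ∑ v : ZMod p, quadraticChar (ZMod p) v * quadraticChar (ZMod p) (v + a) = -1 := by
  have h0 : ∑ v : ZMod p, quadraticChar (ZMod p) v * quadraticChar (ZMod p) (v + a)
      = ∑ v ∈ univ.erase (0 : ZMod p),
          quadraticChar (ZMod p) v * quadraticChar (ZMod p) (v + a) := by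
    rw [← Finset.sum_erase_add univ _ (mem_univ (0 : ZMod p))]
    simp
  rw [h0]
  have h1 : ∀ v ∈ univ.erase (0 : ZMod p),
      quadraticChar (ZMod p) v * quadraticChar (ZMod p) (v + a)
        = quadraticChar (ZMod p) (1 + a * v⁻¹) := by
    intro v hv
    have hv0 : v ≠ 0 := (mem_erase.mp hv).1
    have hid : v * (v + a) = v ^ 2 * (1 + a * v⁻¹) := by
      field_simp
    rw [← map_mul, hid, map_mul, quadraticChar_sq_one' hv0, one_mul]
  rw [Finset.sum_congr rfl h1]
  have h2 : ∑ v ∈ univ.erase (0 : ZMod p), quadraticChar (ZMod p) (1 + a * v⁻¹)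
      = ∑ w ∈ univ.erase (1 : ZMod p), quadraticChar (ZMod p) w := by
    refine Finset.sum_bij' (fun v _ => 1 + a * v⁻¹) (fun w _ => a * (w - 1)⁻¹) ?_ ?_ ?_ ?_ ?_
    · intro v hv
      have hv0 : v ≠ 0 := (mem_erase.mp hv).1
      refine mem_erase.mpr ⟨?_, mem_univ _⟩
      intro h
      have : a * v⁻¹ = 0 := by linear_combination h
      rcases mul_eq_zero.mp this with h' | h'
      · exact ha h'
      · exact hv0 (inv_eq_zero.mp h')
    · intro w hw
      have hw1 : w ≠ 1 := (mem_erase.mp hw).1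
      refine mem_erase.mpr ⟨?_, mem_univ _⟩
      intro h
      rcases mul_eq_zero.mp h with h' | h'
      · exact ha h'
      · exact hw1 (by have := inv_eq_zero.mp h'; linear_combination this)
    · intro v hv
      have hv0 : v ≠ 0 := (mem_erase.mp hv).1
      have hav : a * v⁻¹ ≠ 0 := by
        intro h
        rcases mul_eq_zero.mp h with h' | h'
        · exact ha h'
        · exact hv0 (inv_eq_zero.mp h')
      field_simp
      rw [add_sub_cancel_left, div_self ha]
    · intro w hw
      have hw1 : w - 1 ≠ 0 := sub_ne_zero.mpr (mem_erase.mp hw).1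
      have haw : a * (w - 1)⁻¹ ≠ 0 := by
        intro h
        rcases mul_eq_zero.mp h with h' | h'
        · exact ha h'
        · exact hw1 (inv_eq_zero.mp h')
      field_simp
      ring
    · intro v hv
      rfl
  rw [h2]
  have h3 := Finset.sum_erase_add univ (fun w => quadraticChar (ZMod p) w)
    (mem_univ (1 : ZMod p))
  rw [quadraticChar_sum_zero (aux_char_ne_two hp)] at h3
  simp only [map_one] at h3
  linarith

private lemma aux_S (hp : 3 < p) (a : ZMod p) :
    ∑ u : ZMod p, quadraticChar (ZMod p) (u ^ 2 + a)
      = if a = 0 then (p : ℤ) - 1 else -1 := by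
  by_cases ha : a = 0
  · subst ha
    rw [if_pos rfl]
    rw [← Finset.sum_erase_add univ _ (mem_univ (0 : ZMod p))]
    have : ∀ v ∈ univ.erase (0 : ZMod p),
        quadraticChar (ZMod p) (v ^ 2 + 0) = 1 := by
      intro v hv
      rw [add_zero]
      exact quadraticChar_sq_one' (mem_erase.mp hv).1
    rw [Finset.sum_congr rfl this]
    simp [Finset.card_erase_of_mem, ZMod.card]
    omega
  · rw [if_neg ha]
    have hfib := Finset.sum_fiberwise' univ (fun u : ZMod p => u ^ 2)
      (fun v => quadraticChar (ZMod p) (v + a))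
    rw [← hfib]
    have hcard : ∀ j : ZMod p,
        ∑ _i ∈ univ.filter (fun i : ZMod p => i ^ 2 = j), quadraticChar (ZMod p) (j + a)
          = (quadraticChar (ZMod p) j + 1) * quadraticChar (ZMod p) (j + a) := by
      intro j
      rw [Finset.sum_const, nsmul_eq_mul]
      have hset : (univ.filter (fun i : ZMod p => i ^ 2 = j))
          = {x : ZMod p | x ^ 2 = j}.toFinset := by
        ext x; simp
      have hq := quadraticChar_card_sqrts (aux_char_ne_two hp) j
      rw [hset, hq]
    rw [Finset.sum_congr rfl (fun j _ => hcard j)]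
    simp_rw [add_mul, one_mul]
    rw [Finset.sum_add_distrib, aux_J hp ha, aux_shift_sum hp a]
    norm_num

end Aux

/-- For a prime `p > 3` and the family `y² = x³ + t x² + t²`, the
first-moment sum equals `-p`. -/
theorem first_moment_family_three (p : ℕ) [Fact p.Prime] (hp : 3 < p) :
    ∑ t : ZMod p,
      (-∑ x : ZMod p,
        legendreSym p ((x.val : ℤ) ^ 3 + (t.val : ℤ) * (x.val : ℤ) ^ 2 + (t.val : ℤ) ^ 2)) =
      -(p : ℤ) := by
  have hleg : ∀ x t : ZMod p,
      legendreSym p ((x.val : ℤ) ^ 3 + (t.val : ℤ) * (x.val : ℤ) ^ 2 + (t.val : ℤ) ^ 2)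
        = quadraticChar (ZMod p) (x ^ 3 + t * x ^ 2 + t ^ 2) := by
    intro x t
    unfold legendreSym
    congr 1
    push_cast [ZMod.natCast_val, ZMod.cast_id]
    ring
  simp_rw [hleg]
  rw [Finset.sum_neg_distrib, neg_inj]
  rw [Finset.sum_comm]
  have key : ∀ x : ZMod p, ∑ t : ZMod p, quadraticChar (ZMod p) (x ^ 3 + t * x ^ 2 + t ^ 2)
      = if x = 0 ∨ x = 4 then (p : ℤ) - 1 else -1 := by
    intro x
    have h2 : (2 : ZMod p) ≠ 0 := aux_two_ne_zero hp
    set b : ZMod p := x ^ 2 / 2 with hb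
    have h2b : b + b = x ^ 2 := by
      rw [hb]; field_simp; ring
    set c : ZMod p := x ^ 3 - b ^ 2 with hc
    have hsub : ∑ t : ZMod p, quadraticChar (ZMod p) (x ^ 3 + t * x ^ 2 + t ^ 2)
        = ∑ u : ZMod p, quadraticChar (ZMod p) (u ^ 2 + c) := by
      refine Fintype.sum_equiv (Equiv.addRight b) _ _ (fun t => ?_)
      show quadraticChar (ZMod p) (x ^ 3 + t * x ^ 2 + t ^ 2)
        = quadraticChar (ZMod p) ((t + b) ^ 2 + c)
      congr 1
      rw [hc, ← h2b]; ring
    rw [hsub, aux_S hp c]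
    have hc0 : c = 0 ↔ (x = 0 ∨ x = 4) := by
      constructor
      · intro h
        have h2b' : (2 : ZMod p) * b = x ^ 2 := by linear_combination h2b
        have hb4 : (4 : ZMod p) * b ^ 2 = x ^ 4 := by
          linear_combination ((2 : ZMod p) * b + x ^ 2) * h2b'
        have h4 : x ^ 3 * (4 - x) = 0 := by
          rw [hc] at h
          linear_combination (4 : ZMod p) * h + hb4
        rcases mul_eq_zero.mp h4 with h' | h'
        · exact Or.inl ((pow_eq_zero_iff (by norm_num : (3:ℕ) ≠ 0)).mp h')
        · exact Or.inr (by linear_combination -h')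
      · rintro (rfl | rfl)
        · rw [hc, hb]; norm_num
        · rw [hc, hb]; field_simp; norm_num
    simp only [hc0]
  rw [Finset.sum_congr rfl (fun x _ => key x)]
  have h40 : (4 : ZMod p) ≠ 0 := aux_four_ne_zero hp
  have hmem : ∀ x : ZMod p, (if x = 0 ∨ x = 4 then (p : ℤ) - 1 else -1)
      = (if x ∈ ({0, 4} : Finset (ZMod p)) then (p : ℤ) else 0) + (-1) := by
    intro x
    have : (x = 0 ∨ x = 4) ↔ x ∈ ({0, 4} : Finset (ZMod p)) := by simp
    rw [if_congr this rfl rfl]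
    split <;> ring
  rw [Finset.sum_congr rfl (fun x _ => hmem x)]
  rw [Finset.sum_add_distrib, Finset.sum_ite_mem, Finset.univ_inter, Finset.sum_const,
    Finset.sum_const]
  have hcard : ({0, 4} : Finset (ZMod p)).card = 2 := by
    rw [Finset.card_insert_of_notMem (by
      simp only [Finset.mem_singleton]; exact fun h => h40 h.symm), Finset.card_singleton]
  rw [hcard, Finset.card_univ, ZMod.card]
  norm_num
  ring
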